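/- arXiv:2202.08555 — 2 statements merged into one kernel-verified Lean document; each statement's English description precedes it below -/
import Mathlib

section
/- Transitivity propagation in tree decompositions: let S be a binary relation on α with a tree decomposition (tree T, bags λ) such that every S-edge is contained in some bag and the connectivity condition holds. Suppose S satisfies bag-transitivity: for every node v and every S-path x₀, x₁, ..., xₙ (n ≥ 1) with all xᵢ ∈ λ(v), we have S x₀ xₙ. Then for any elements x, y lying together in some bag, if there is an S-path from x to y (through arbitrary elements), then S x y. -/
open SimpleGraph

private lemma side_unique' {V : Type*} {T : SimpleGraph V} (hacyc : T.IsAcyclic)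
    {v w w' : V} (h : T.Adj v w) (h' : T.Adj v w')
    (q : T.Walk w w') (hq : v ∉ q.support) : w = w' := by
  have hb := (isAcyclic_iff_forall_adj_isBridge.mp hacyc) h
  rw [SimpleGraph.isBridge_iff_adj_and_forall_walk_mem_edges] at hb
  have hmem := hb (SimpleGraph.Walk.cons h' q.reverse)
  rw [SimpleGraph.Walk.edges_cons, List.mem_cons] at hmem
  rcases hmem with h1 | h2
  · exact Sym2.congr_right.mp h1
  · exfalso
    have : v ∈ q.reverse.support := SimpleGraph.Walk.fst_mem_support_of_mem_edges _ h2
    rw [SimpleGraph.Walk.support_reverse, List.mem_reverse] at this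
    exact hq this

private lemma step_lemma' {V : Type*} {T : SimpleGraph V} (hconnT : T.Connected)
    (hacyc : T.IsAcyclic) {v u : V} (hu : u ≠ v) :
    ∃ w, T.Adj v w ∧ (∃ q : T.Walk u w, v ∉ q.support) ∧
      T.dist w u + 1 ≤ T.dist v u ∧ ∀ r : T.Walk u v, w ∈ r.support := by
  classical
  obtain ⟨p0, hp0⟩ := hconnT.exists_walk_length_eq_dist v u
  have hplen : p0.bypass.length = T.dist v u := by
    have h1 := SimpleGraph.Walk.length_bypass_le p0
    have h2 := SimpleGraph.dist_le p0.bypass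
    omega
  have hpath : p0.bypass.IsPath := p0.bypass_isPath
  generalize p0.bypass = p at hplen hpath
  cases p with
  | nil => exact absurd rfl hu.symm
  | @cons _ w _ hadj q =>
    refine ⟨w, hadj, ⟨q.reverse, ?_⟩, ?_, ?_⟩
    · rw [SimpleGraph.Walk.support_reverse, List.mem_reverse]
      exact ((SimpleGraph.Walk.cons_isPath_iff hadj q).mp hpath).2
    · have h1 : T.dist w u ≤ q.length := SimpleGraph.dist_le q
      have h2 : q.length + 1 = T.dist v u := by
        simpa [SimpleGraph.Walk.length_cons] using hplen
      omega
    · intro r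
      have hpeq : (⟨SimpleGraph.Walk.cons hadj q, hpath⟩ : T.Path v u)
          = ⟨r.reverse.bypass, r.reverse.bypass_isPath⟩ :=
        (isAcyclic_iff_path_unique.mp hacyc) _ _
      have hws : w ∈ (SimpleGraph.Walk.cons hadj q).support := by
        rw [SimpleGraph.Walk.support_cons]
        exact List.mem_cons_of_mem _ q.start_mem_support
      have : w ∈ r.reverse.bypass.support := by
        have := congrArg (fun (p : T.Path v u) => (p : T.Walk v u).support) hpeq
        exact (by simpa using this : (SimpleGraph.Walk.cons hadj q).support = r.reverse.bypass.support) ▸ hws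
      have := SimpleGraph.Walk.support_bypass_subset _ this
      rw [SimpleGraph.Walk.support_reverse, List.mem_reverse] at this
      exact this

private lemma main_lemma' {V α : Type*} {T : SimpleGraph V}
    (hconnT : T.Connected) (hacyc : T.IsAcyclic)
    (bag : V → Set α) (S : α → α → Prop)
    (hconn : ∀ (a : α) (u v : V), a ∈ bag u → a ∈ bag v →
      ∃ w : T.Walk u v, ∀ x ∈ w.support, a ∈ bag x)
    (hbagtrans : ∀ (v : V) (n : ℕ) (x : Fin (n + 1) → α), 1 ≤ n →
      (∀ i, x i ∈ bag v) →
      (∀ i : Fin n, S (x i.castSucc) (x i.succ)) →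
      S (x 0) (x (Fin.last n))) :
    ∀ (n D : ℕ) (v : V) (x : ℕ → α) (u : ℕ → V),
      1 ≤ n →
      (∀ i < n, S (x i) (x (i+1))) →
      (∀ i < n, x i ∈ bag (u i) ∧ x (i+1) ∈ bag (u i)) →
      x 0 ∈ bag v → x n ∈ bag v →
      (∑ i ∈ Finset.range n, T.dist v (u i)) ≤ D →
      S (x 0) (x n) := by
  intro n
  induction n using Nat.strong_induction_on with
  | _ n IHn =>
  intro D
  induction D using Nat.strong_induction_on with
  | _ D IHD =>
  intro v x u hn hS hu hx0 hxn hsum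
  rcases Nat.lt_or_ge n 2 with h2 | h2
  · -- n = 1
    have hn1 : n = 1 := by omega
    subst hn1
    exact hS 0 (by omega)
  by_cases hA : ∃ m, 0 < m ∧ m < n ∧ x m ∈ bag v
  · -- split at interior bag element
    obtain ⟨m, hm0, hmn, hmb⟩ := hA
    have S1 : S (x 0) (x m) :=
      IHn m hmn (∑ i ∈ Finset.range m, T.dist v (u i)) v x u hm0
        (fun i hi => hS i (by omega)) (fun i hi => hu i (by omega)) hx0 hmb le_rfl
    have S2 : S (x m) (x n) := by
      have := IHn (n - m) (by omega) (∑ i ∈ Finset.range (n - m), T.dist v (u (m + i))) v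
        (fun i => x (m + i)) (fun i => u (m + i)) (by omega)
        (fun i hi => hS (m + i) (by omega)) (fun i hi => hu (m + i) (by omega))
        hmb (by
          show x (m + (n - m)) ∈ bag v
          have hmn' : m + (n - m) = n := by omega
          rw [hmn']; exact hxn) le_rfl
      have h2' : S (x (m + 0)) (x (m + (n - m))) := this
      have hmn' : m + (n - m) = n := by omega
      rwa [hmn', Nat.add_zero] at h2'
    have := hbagtrans v 2 ![x 0, x m, x n] (by omega)
      (by intro i; fin_cases i <;> simpa)
      (by intro i; fin_cases i <;> simpa)
    simpa using this
  · -- all interior elements outside bag v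
    push_neg at hA
    have hint : ∀ m, 0 < m → m < n → x m ∉ bag v := hA
    have hune : ∀ i < n, u i ≠ v := by
      intro i hi heq
      rcases Nat.lt_or_ge (i + 1) n with h | h
      · exact hint (i + 1) (by omega) h (heq ▸ (hu i hi).2)
      · exact hint i (by omega) hi (heq ▸ (hu i hi).1)
    have hchain : ∀ i < n, ∃ q : T.Walk (u 0) (u i), v ∉ q.support := by
      intro i
      induction i with
      | zero =>
        intro _
        exact ⟨SimpleGraph.Walk.nil, by simpa using (hune 0 (by omega)).symm⟩
      | succ i ih =>
        intro hi
        obtain ⟨q, hq⟩ := ih (by omega)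
        have hx1 : x (i + 1) ∈ bag (u i) := (hu i (by omega)).2
        have hx2 : x (i + 1) ∈ bag (u (i + 1)) := (hu (i + 1) hi).1
        obtain ⟨r, hr⟩ := hconn (x (i + 1)) (u i) (u (i + 1)) hx1 hx2
        have hvr : v ∉ r.support := fun hv =>
          hint (i + 1) (by omega) hi (hr v hv)
        exact ⟨q.append r, by
          rw [SimpleGraph.Walk.mem_support_append_iff]
          tauto⟩
    obtain ⟨w, hadj, ⟨q0, hq0⟩, _, hsupp0⟩ :=
      step_lemma' hconnT hacyc (hune 0 (by omega))
    have hstep : ∀ i < n, (T.dist w (u i) + 1 ≤ T.dist v (u i)) ∧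
        ∀ r : T.Walk (u i) v, w ∈ r.support := by
      intro i hi
      obtain ⟨wi, hadji, ⟨qi, hqi⟩, hdisti, hsuppi⟩ :=
        step_lemma' hconnT hacyc (hune i hi)
      obtain ⟨c, hc⟩ := hchain i hi
      have hwi : wi = w := by
        refine side_unique' hacyc hadji hadj
          (qi.reverse.append (c.reverse.append q0)) ?_
        simp only [SimpleGraph.Walk.mem_support_append_iff,
          SimpleGraph.Walk.support_reverse, List.mem_reverse]
        tauto
      subst hwi
      exact ⟨hdisti, hsuppi⟩
    -- endpoints in bag w
    have hx0w : x 0 ∈ bag w := by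
      obtain ⟨r, hr⟩ := hconn (x 0) (u 0) v (hu 0 (by omega)).1 hx0
      exact hr w ((hstep 0 (by omega)).2 r)
    have hxnw : x n ∈ bag w := by
      have hxlast : x n ∈ bag (u (n - 1)) := by
        have := (hu (n - 1) (by omega)).2
        have hn1 : n - 1 + 1 = n := by omega
        rwa [hn1] at this
      obtain ⟨r, hr⟩ := hconn (x n) (u (n - 1)) v hxlast hxn
      exact hr w ((hstep (n - 1) (by omega)).2 r)
    -- sum decreases
    have hsum2 : (∑ i ∈ Finset.range n, T.dist w (u i)) + n ≤
        ∑ i ∈ Finset.range n, T.dist v (u i) := by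
      calc (∑ i ∈ Finset.range n, T.dist w (u i)) + n
          = ∑ i ∈ Finset.range n, (T.dist w (u i) + 1) := by
            rw [Finset.sum_add_distrib]; simp
        _ ≤ ∑ i ∈ Finset.range n, T.dist v (u i) :=
            Finset.sum_le_sum (fun i hi => (hstep i (Finset.mem_range.mp hi)).1)
    exact IHD (∑ i ∈ Finset.range n, T.dist w (u i)) (by omega)
      w x u hn hS hu hx0w hxnw le_rfl

/-- Transitivity propagation in tree decompositions: bag-transitivity implies
that any S-path between two elements of a common bag yields a direct S-edge. -/
theorem transitivity_propagation_in_tree_decomposition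
    {V α : Type*} (T : SimpleGraph V)
    (hconnT : T.Connected) (hacyc : T.IsAcyclic)
    (bag : V → Set α) (S : α → α → Prop)
    (hedge : ∀ x y, S x y → ∃ v, x ∈ bag v ∧ y ∈ bag v)
    (hconn : ∀ (a : α) (u v : V), a ∈ bag u → a ∈ bag v →
      ∃ w : T.Walk u v, ∀ x ∈ w.support, a ∈ bag x)
    (hbagtrans : ∀ (v : V) (n : ℕ) (x : Fin (n + 1) → α), 1 ≤ n →
      (∀ i, x i ∈ bag v) →
      (∀ i : Fin n, S (x i.castSucc) (x i.succ)) →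
      S (x 0) (x (Fin.last n))) :
    ∀ (x y : α) (v : V), x ∈ bag v → y ∈ bag v →
      Relation.TransGen S x y → S x y := by
  intro x y v hx hy htg
  have hpath : ∃ n, 1 ≤ n ∧ ∃ f : ℕ → α, f 0 = x ∧ f n = y ∧
      ∀ i < n, S (f i) (f (i + 1)) := by
    clear hx hy
    induction htg with
    | @single b h =>
      refine ⟨1, le_rfl, fun i => if i = 0 then x else b, by simp, by simp, ?_⟩
      intro i hi
      have : i = 0 := by omega
      subst this
      simpa using h
    | @tail b c _ hlast ih =>
      obtain ⟨n, hn, f, hf0, hfn, hf⟩ := ih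
      refine ⟨n + 1, by omega, fun i => if i ≤ n then f i else c, ?_, ?_, ?_⟩
      · simpa using hf0
      · simp
      · intro i hi
        rcases Nat.lt_or_ge i n with h | h
        · simpa [Nat.le_of_lt h, Nat.succ_le_of_lt h] using hf i h
        · have : i = n := by omega
          subst this
          simpa [hfn] using hlast
  obtain ⟨n, hn, f, hf0, hfn, hf⟩ := hpath
  have hu : ∀ i, ∃ wv, f i ∈ bag wv ∧ f (i + 1) ∈ bag wv ∨ wv = v := by
    intro i
    by_cases h : i < n
    · obtain ⟨wv, h1, h2⟩ := hedge _ _ (hf i h)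
      exact ⟨wv, Or.inl ⟨h1, h2⟩⟩
    · exact ⟨v, Or.inr rfl⟩
  classical
  set u : ℕ → V := fun i => if h : i < n then Classical.choose (hedge _ _ (hf i h)) else v
    with hu_def
  have hubag : ∀ i < n, f i ∈ bag (u i) ∧ f (i + 1) ∈ bag (u i) := by
    intro i hi
    simp only [hu_def, dif_pos hi]
    exact Classical.choose_spec (hedge _ _ (hf i hi))
  have := main_lemma' hconnT hacyc bag S hconn hbagtrans n
    (∑ i ∈ Finset.range n, T.dist v (u i)) v f u hn hf hubag
    (hf0 ▸ hx) (hfn ▸ hy) le_rfl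
  rwa [hf0, hfn] at this
end

section
/- Linear-order encoding of 3-colorability: a finite simple graph G = (V, E) is 3-colorable if and only if there exist a type L with a strict linear order <, two elements b₁ < b₂ of L, and a function f : V → L with f(v) ≠ b₁ and f(v) ≠ b₂ for all v, such that no two adjacent vertices u, v ∈ E fall into the same interval among: (elements < b₁), (elements strictly between b₁ and b₂), and (elements > b₂). -/
/-- Linear-order encoding of 3-colorability. -/
theorem three_colorable_iff_linear_order_encoding
    {V : Type} [Fintype V] (G : SimpleGraph V) :
    (∃ c : V → Fin 3, ∀ u v, G.Adj u v → c u ≠ c v) ↔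
    (∃ (L : Type) (lt : L → L → Prop) (b₁ b₂ : L) (f : V → L),
      (∀ a, ¬ lt a a) ∧
      (∀ a b c, lt a b → lt b c → lt a c) ∧
      (∀ a b, a ≠ b → lt a b ∨ lt b a) ∧
      lt b₁ b₂ ∧
      (∀ v, f v ≠ b₁ ∧ f v ≠ b₂) ∧
      (∀ u v, G.Adj u v →
        ¬ ((lt (f u) b₁ ∧ lt (f v) b₁) ∨
           ((lt b₁ (f u) ∧ lt (f u) b₂) ∧ (lt b₁ (f v) ∧ lt (f v) b₂)) ∨
           (lt b₂ (f u) ∧ lt b₂ (f v))))) := by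
  constructor
  · rintro ⟨c, hc⟩
    let g : Fin 3 → Fin 5 := ![0, 2, 4]
    refine ⟨Fin 5, (· < ·), 1, 3, fun v => g (c v),
      fun a => lt_irrefl a, fun a b c => lt_trans, fun a b h => h.lt_or_gt, by decide,
      fun v => (by decide : ∀ x : Fin 3, g x ≠ 1 ∧ g x ≠ 3) (c v), ?_⟩
    intro u v huv
    exact (by decide : ∀ x y : Fin 3, x ≠ y →
      ¬ ((g x < 1 ∧ g y < 1) ∨ ((1 < g x ∧ g x < 3) ∧ (1 < g y ∧ g y < 3)) ∨
         (3 < g x ∧ 3 < g y))) (c u) (c v) (hc u v huv)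
  · rintro ⟨L, lt, b₁, b₂, f, hirr, htr, hto, hb, hf, hadj⟩
    classical
    refine ⟨fun v => if lt (f v) b₁ then 0 else if lt (f v) b₂ then 1 else 2, ?_⟩
    intro u v huv
    have h := hadj u v huv
    have key : ∀ w, ¬ lt (f w) b₁ → ¬ lt (f w) b₂ → lt b₂ (f w) := by
      intro w h1 h2
      rcases hto (f w) b₂ (hf w).2 with h3 | h3
      · exact absurd h3 h2
      · exact h3
    have key1 : ∀ w, ¬ lt (f w) b₁ → lt b₁ (f w) := by
      intro w h1
      rcases hto (f w) b₁ (hf w).1 with h3 | h3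
      · exact absurd h3 h1
      · exact h3
    dsimp only
    split_ifs <;> try decide
    · rename_i h1 h2
      exact absurd (Or.inl ⟨h1, h2⟩) h
    · rename_i h1 h2 h3 h4
      exact absurd (Or.inr (Or.inl ⟨⟨key1 u h1, h2⟩, ⟨key1 v h3, h4⟩⟩)) h
    · rename_i h1 h2 h3 h4
      exact absurd (Or.inr (Or.inr ⟨key u h1 h2, key v h3 h4⟩)) h
end
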